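/- arXiv:1409.0125 — 3 statements merged into one kernel-verified Lean document; each statement's English description precedes it below -/
import Mathlib

section
/- A pattern group P of depth d is minimal if and only if P equals the restriction G_P|_{X^[d]}, i.e., if and only if every pattern in P is realized as the restriction to X^[d] of some element of G_P. -/
open List

/-- The group of automorphisms of the rooted tree `X*` (vertices = words over `X`,
root = empty word, edges `(v, vx)`), as a subgroup of the permutations of `List X`. -/
def treeAut (X : Type*) : Subgroup (Equiv.Perm (List X)) where
  carrier := {f | f [] = [] ∧ ∀ (v : List X) (x : X), ∃ y : X, f (v ++ [x]) = f v ++ [y]}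
  one_mem' := ⟨rfl, fun _ x => ⟨x, rfl⟩⟩
  mul_mem' := by
    rintro f g ⟨hf0, hf⟩ ⟨hg0, hg⟩
    refine ⟨by simp [Equiv.Perm.mul_apply, hg0, hf0], fun v x => ?_⟩
    obtain ⟨y, hy⟩ := hg v x
    obtain ⟨z, hz⟩ := hf (g v) y
    exact ⟨z, by simp [Equiv.Perm.mul_apply, hy, hz]⟩
  inv_mem' := by
    rintro f ⟨hf0, hf⟩
    have h0 : f⁻¹ [] = ([] : List _) := by
      have h : f⁻¹ (f []) = [] := by simp
      rwa [hf0] at h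
    refine ⟨h0, fun v x => ?_⟩
    rcases List.eq_nil_or_concat (f⁻¹ (v ++ [x])) with h | ⟨w, z, hw⟩
    · exfalso
      have h1 : v ++ [x] = f ([] : List _) := by
        have := congrArg (fun t => f t) h
        simpa using this
      rw [hf0] at h1
      simp at h1
    · rw [List.concat_eq_append] at hw
      obtain ⟨y, hy⟩ := hf w z
      have h2 : f w ++ [y] = v ++ [x] := by
        rw [← hy]
        have := congrArg (fun t => f t) hw
        simpa using this.symm
      have h3 := (List.append_inj' h2 rfl).1
      have h4 : w = f⁻¹ v := by rw [← h3]; simp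
      exact ⟨z, by rw [hw, h4]⟩

theorem treeAut.length_apply {X : Type*} {f : Equiv.Perm (List X)} (hf : f ∈ treeAut X)
    (v : List X) : (f v).length = v.length := by
  induction v using List.reverseRecOn with
  | nil => simp [hf.1]
  | append_singleton v x ih =>
      obtain ⟨y, hy⟩ := hf.2 v x
      simp [hy, ih]

/-- The section function: `sectFun f v w` is the word `u` with `f (v ++ w) = f v ++ u`. -/
def sectFun {X : Type*} (f : Equiv.Perm (List X)) (v w : List X) : List X :=
  (f (v ++ w)).drop v.length

theorem treeAut.apply_append {X : Type*} {f : Equiv.Perm (List X)} (hf : f ∈ treeAut X)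
    (v w : List X) : f (v ++ w) = f v ++ sectFun f v w := by
  have hpre : f v <+: f (v ++ w) := by
    induction w using List.reverseRecOn with
    | nil => simp
    | append_singleton w x ih =>
        obtain ⟨y, hy⟩ := hf.2 (v ++ w) x
        rw [← List.append_assoc, hy]
        exact ih.trans (List.prefix_append _ _)
  obtain ⟨t, ht⟩ := hpre
  have hd : sectFun f v w = t := by
    simp only [sectFun]
    rw [← ht, ← treeAut.length_apply hf v, List.drop_left]
  rw [hd, ht]

/-- The section of a tree automorphism `g` at a vertex `v`, as a tree automorphism. -/
def sect {X : Type*} (g : ↥(treeAut X)) (v : List X) : ↥(treeAut X) := by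
  refine ⟨{ toFun := sectFun (g : Equiv.Perm (List X)) v
            invFun := sectFun ((g : Equiv.Perm (List X))⁻¹) ((g : Equiv.Perm (List X)) v)
            left_inv := ?_
            right_inv := ?_ }, ?_, ?_⟩
  · intro w
    show sectFun _ _ (sectFun _ _ _) = w
    have ha := treeAut.apply_append g.2 v w
    simp only [sectFun] at ha ⊢
    rw [← ha, (by simp : (g : Equiv.Perm (List X))⁻¹ ((g : Equiv.Perm (List X)) (v ++ w)) = v ++ w), treeAut.length_apply g.2, List.drop_left]
  · intro w
    have hginv : (g : Equiv.Perm (List X))⁻¹ ∈ treeAut X := (treeAut X).inv_mem g.2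
    show sectFun _ _ (sectFun _ _ _) = w
    have key : (v : List X) ++ sectFun ((g : Equiv.Perm (List X))⁻¹) ((g : Equiv.Perm (List X)) v) w
        = (g : Equiv.Perm (List X))⁻¹ ((g : Equiv.Perm (List X)) v ++ w) := by
      have h1 := treeAut.apply_append hginv ((g : Equiv.Perm (List X)) v) w
      have h2 : (g : Equiv.Perm (List X))⁻¹ ((g : Equiv.Perm (List X)) v) = v := by simp
      rw [h1, h2]
    simp only [sectFun]
    simp only [sectFun] at key
    rw [key]
    simp [treeAut.length_apply g.2]
  · show sectFun _ _ [] = []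
    simp only [sectFun, List.append_nil]
    exact List.drop_eq_nil_of_le (le_of_eq (treeAut.length_apply g.2 v))
  · intro w x
    show ∃ y, sectFun _ _ (w ++ [x]) = sectFun _ _ w ++ [y]
    obtain ⟨y, hy⟩ := g.2.2 (v ++ w) x
    refine ⟨y, ?_⟩
    simp only [sectFun]
    rw [← List.append_assoc, hy, List.drop_append_of_le_length]
    rw [treeAut.length_apply g.2]
    simp

theorem sect_apply {X : Type*} (g : ↥(treeAut X)) (v w : List X) :
    ((sect g v : ↥(treeAut X)) : Equiv.Perm (List X)) w
      = sectFun (g : Equiv.Perm (List X)) v w := rfl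

theorem sect_nil {X : Type*} (g : ↥(treeAut X)) : sect g [] = g := by
  apply Subtype.ext
  apply Equiv.ext
  intro w
  rw [sect_apply]
  simp [sectFun]

theorem sect_append {X : Type*} (g : ↥(treeAut X)) (v u : List X) :
    sect g (v ++ u) = sect (sect g v) u := by
  apply Subtype.ext
  apply Equiv.ext
  intro w
  show sectFun (g : Equiv.Perm (List X)) (v ++ u) w
    = sectFun ((sect g v : ↥(treeAut X)) : Equiv.Perm (List X)) u w
  simp only [sectFun, sect_apply]
  rw [List.append_assoc, List.drop_drop, List.length_append, Nat.add_comm]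

theorem sect_one {X : Type*} (v : List X) : sect (1 : ↥(treeAut X)) v = 1 := by
  apply Subtype.ext
  apply Equiv.ext
  intro w
  rw [sect_apply]
  simp [sectFun]

theorem sect_mul {X : Type*} (g h : ↥(treeAut X)) (v : List X) :
    sect (g * h) v = sect g ((h : Equiv.Perm (List X)) v) * sect h v := by
  apply Subtype.ext
  apply Equiv.ext
  intro w
  show (((g * h : ↥(treeAut X)) : Equiv.Perm (List X)) (v ++ w)).drop v.length
      = ((g : Equiv.Perm (List X)) ((h : Equiv.Perm (List X)) v
          ++ sectFun (h : Equiv.Perm (List X)) v w)).drop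
            ((h : Equiv.Perm (List X)) v).length
  have hcoe : ((g * h : ↥(treeAut X)) : Equiv.Perm (List X)) (v ++ w)
      = (g : Equiv.Perm (List X)) ((h : Equiv.Perm (List X)) (v ++ w)) := rfl
  have hh := treeAut.apply_append h.2 v w
  rw [hcoe, hh, treeAut.length_apply h.2]

theorem sect_inv {X : Type*} (g : ↥(treeAut X)) (v : List X) :
    sect g⁻¹ v = (sect g (((g : Equiv.Perm (List X))⁻¹) v))⁻¹ := by
  have h1 : sect (g * g⁻¹) v = 1 := by rw [mul_inv_cancel, sect_one]
  have h2 := (sect_mul g g⁻¹ v).symm.trans h1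
  exact eq_inv_of_mul_eq_one_right h2

/-- The automorphism group of the finite subtree `X^[d]` of words of length at most `d`
is modelled inside the permutations of the set of such words. -/
abbrev Pat (X : Type*) (d : ℕ) := Equiv.Perm {l : List X // l.length ≤ d}

/-- The restriction homomorphism `Aut X* → Sym(X^[d])`. -/
def restr (X : Type*) (d : ℕ) : ↥(treeAut X) →* Pat X d where
  toFun g :=
    { toFun := fun w => ⟨(g : Equiv.Perm (List X)) w.1,
        by rw [treeAut.length_apply g.2]; exact w.2⟩
      invFun := fun w => ⟨(g : Equiv.Perm (List X))⁻¹ w.1,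
        by rw [treeAut.length_apply ((treeAut X).inv_mem g.2)]; exact w.2⟩
      left_inv := fun w => by
        apply Subtype.ext
        simp
      right_inv := fun w => by
        apply Subtype.ext
        simp }
  map_one' := by
    apply Equiv.ext
    intro w
    rfl
  map_mul' := fun g h => by
    apply Equiv.ext
    intro w
    rfl

/-- `Aut X^[d]`: the automorphism group of the finite tree `X^[d]`, realized as the
image of `Aut X*` under restriction (every automorphism of the finite tree extends). -/
def finAut (X : Type*) (d : ℕ) : Subgroup (Pat X d) := (restr X d).range

/-- The `n`-th level stabilizer in `Aut X*`: automorphisms fixing all words of length `≤ n`. -/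
def levelStab (X : Type*) (n : ℕ) : Subgroup ↥(treeAut X) := (restr X n).ker

/-- The self-similar group of finite type `G_P` given by a pattern group `P ≤ Aut X^[d]`:
all tree automorphisms all of whose sections restrict to elements of `P` on `X^[d]`. -/
def GP (X : Type*) (d : ℕ) (P : Subgroup (Pat X d)) : Subgroup ↥(treeAut X) where
  carrier := {g | ∀ v : List X, restr X d (sect g v) ∈ P}
  one_mem' := fun v => by rw [sect_one, map_one]; exact P.one_mem
  mul_mem' := fun {a b} ha hb v => by
    rw [sect_mul, map_mul]; exact P.mul_mem (ha _) (hb v)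
  inv_mem' := fun {a} ha v => by
    rw [sect_inv, map_inv]; exact P.inv_mem (ha _)

theorem mem_GP {X : Type*} {d : ℕ} {P : Subgroup (Pat X d)} (g : ↥(treeAut X)) :
    g ∈ GP X d P ↔ ∀ v : List X, restr X d (sect g v) ∈ P := Iff.rfl

/-- The edge relation `a →^x b` of the pattern graph `Γ_P`: the section of the pattern `a`
at the letter `x` agrees with the pattern `b` on `X^[d-1]`. -/
def patEdge (X : Type*) (d : ℕ) (a : Pat X d) (x : X) (b : Pat X d) : Prop :=
  ∀ (w : List X) (hw : w.length ≤ d - 1) (hw' : (x :: w).length ≤ d),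
    ((a ⟨x :: w, hw'⟩ : {l : List X // l.length ≤ d}) : List X).tail
      = ((b ⟨w, le_trans hw (Nat.sub_le d 1)⟩ : {l : List X // l.length ≤ d}) : List X)

/-- The subgroup of `Sym(X^[d])` of elements fixing all words of length at most `k`. -/
def patLevelStab (X : Type*) (d k : ℕ) : Subgroup (Pat X d) where
  carrier := {a | ∀ (w : List X) (hw : w.length ≤ d), w.length ≤ k → a ⟨w, hw⟩ = ⟨w, hw⟩}
  one_mem' := fun _ _ _ => rfl
  mul_mem' := fun {a b} ha hb w hw hk => by
    have h1 := hb w hw hk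
    have h2 := ha w hw hk
    show a (b ⟨w, hw⟩) = ⟨w, hw⟩
    rw [h1, h2]
  inv_mem' := fun {a} ha w hw hk => by
    have h1 := ha w hw hk
    have h2 : a⁻¹ (a ⟨w, hw⟩) = ⟨w, hw⟩ := by simp
    rwa [h1] at h2

/-- Level-transitivity: the group acts transitively on every level `X^n` of the tree. -/
def LevelTrans {X : Type*} (G : Subgroup ↥(treeAut X)) : Prop :=
  ∀ u v : List X, u.length = v.length → ∃ g ∈ G, (g : Equiv.Perm (List X)) u = v

/-- Topological finite generation of a closed subgroup `G ≤ Aut X*`, expressed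
concretely: some finite subset of `G` generates a subgroup which is dense in `G`
for the profinite (congruence) topology of `Aut X*`. -/
def TopFG {X : Type*} (G : Subgroup ↥(treeAut X)) : Prop :=
  ∃ S : Finset ↥(treeAut X), (S : Set ↥(treeAut X)) ⊆ (G : Set ↥(treeAut X)) ∧
    ∀ g ∈ G, ∀ n : ℕ, ∃ h ∈ Subgroup.closure (S : Set ↥(treeAut X)),
      ∀ w : List X, w.length ≤ n →
        (h : Equiv.Perm (List X)) w = (g : Equiv.Perm (List X)) w


/-- A pattern group `P` of depth `d` is minimal if every pattern group defining the same
self-similar group of finite type contains it. -/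
def IsMinimalPattern (X : Type*) (d : ℕ) (P : Subgroup (Pat X d)) : Prop :=
  ∀ Q : Subgroup (Pat X d), Q ≤ finAut X d → GP X d P = GP X d Q → P ≤ Q

/-- `P` is minimal iff `P` equals the restriction `G_P|_(X^[d])`, i.e. iff
every pattern of `P` is realized as the restriction of an element of `G_P`. -/
theorem statement7 {X : Type*} [Fintype X] [Nontrivial X] (d : ℕ) (hd : 1 ≤ d)
    (P : Subgroup (Pat X d)) (hP : P ≤ finAut X d) :
    IsMinimalPattern X d P ↔ P = Subgroup.map (restr X d) (GP X d P) := by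
  set M := Subgroup.map (restr X d) (GP X d P) with hM
  have hsect : ∀ g ∈ GP X d P, ∀ v, sect g v ∈ GP X d P := by
    intro g hg v u
    rw [← sect_append]
    exact hg (v ++ u)
  have hMP : M ≤ P := by
    rintro a ⟨g, hg, rfl⟩
    have := hg []
    rwa [sect_nil] at this
  have hGP : GP X d P = GP X d M := by
    apply _root_.le_antisymm
    · intro g hg v
      exact ⟨sect g v, hsect g hg v, rfl⟩
    · intro g hg v
      exact hMP (hg v)
  constructor
  · intro hmin
    exact _root_.le_antisymm (hmin M (Subgroup.map_le_range _ _) hGP) hMP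
  · intro hPM Q hQ hGQ a ha
    rw [hPM] at ha
    obtain ⟨g, hg, rfl⟩ := ha
    rw [hGQ] at hg
    have := hg []
    rwa [sect_nil] at this
end

section
/- Every element g of G_P defines a homomorphism of labeled directed graphs φ: X* → Γ_P by φ(v) = g_{(v)}|_{X^[d]}, and conversely every homomorphism of labeled directed graphs φ: X* → Γ_P arises in this way from a unique element g ∈ G_P. -/
open List

section Aux

variable {X : Type*} {d : ℕ}

theorem finAut_len {a : Pat X d} (ha : a ∈ finAut X d)
    (w : {l : List X // l.length ≤ d}) : ((a w : {l : List X // l.length ≤ d}) : List X).length = (w : List X).length := by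
  obtain ⟨g, rfl⟩ := ha
  exact treeAut.length_apply g.2 w.1

theorem finAut_cons {a : Pat X d} (ha : a ∈ finAut X d) (x : X) (w : List X)
    (h1 : ([x] : List X).length ≤ d) (hw : (x :: w).length ≤ d) :
    ((a ⟨x :: w, hw⟩ : {l : List X // l.length ≤ d}) : List X)
      = ((a ⟨[x], h1⟩ : {l : List X // l.length ≤ d}) : List X)
        ++ ((a ⟨x :: w, hw⟩ : {l : List X // l.length ≤ d}) : List X).tail := by
  obtain ⟨g, rfl⟩ := ha
  show (g : Equiv.Perm (List X)) (x :: w)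
      = (g : Equiv.Perm (List X)) [x] ++ ((g : Equiv.Perm (List X)) (x :: w)).tail
  have h := treeAut.apply_append g.2 [x] w
  have hl : ((g : Equiv.Perm (List X)) [x]).length = 1 := treeAut.length_apply g.2 [x]
  obtain ⟨y, hy⟩ := List.length_eq_one_iff.mp hl
  rw [show (x :: w) = [x] ++ w from rfl, h, hy]
  rfl

/-- build the automorphism from the graph morphism -/
def buildF (hd : 1 ≤ d) : (List X → Pat X d) → List X → List X
  | _, [] => []
  | φ, x :: w =>
      ((φ [] ⟨[x], by simpa using hd⟩ : {l : List X // l.length ≤ d}) : List X)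
        ++ buildF hd (fun v => φ ([x] ++ v)) w

def invBuild (hd : 1 ≤ d) : (List X → Pat X d) → List X → List X
  | _, [] => []
  | φ, x :: w =>
      (((φ [])⁻¹ ⟨[x], by simpa using hd⟩ : {l : List X // l.length ≤ d}) : List X)
        ++ invBuild hd
          (fun v => φ ((((φ [])⁻¹ ⟨[x], by simpa using hd⟩ : {l : List X // l.length ≤ d}) : List X) ++ v)) w

variable {hd : 1 ≤ d} {P : Subgroup (Pat X d)}

theorem buildF_length (hP : P ≤ finAut X d) (φ : List X → Pat X d) (hφ : ∀ v, φ v ∈ P) :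
    ∀ w : List X, (buildF hd φ w).length = w.length := by
  intro w
  induction w generalizing φ with
  | nil => rfl
  | cons x w ih =>
      have h1 : (([x] : List X)).length ≤ d := by simpa using hd
      have hlen : ((φ [] ⟨[x], h1⟩ : {l : List X // l.length ≤ d}) : List X).length = 1 := by
        simpa using finAut_len (hP (hφ [])) ⟨[x], h1⟩
      show (((φ [] ⟨[x], h1⟩ : {l : List X // l.length ≤ d}) : List X)
          ++ buildF hd (fun v => φ ([x] ++ v)) w).length = (x :: w).length
      rw [List.length_append, hlen, ih (fun v => φ ([x] ++ v)) (fun v => hφ _)]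
      simp [Nat.add_comm]

theorem buildF_append (φ : List X → Pat X d) (v w : List X) :
    buildF hd φ (v ++ w) = buildF hd φ v ++ buildF hd (fun u => φ (v ++ u)) w := by
  induction v generalizing φ with
  | nil => rfl
  | cons x v ih =>
      show buildF hd φ (x :: (v ++ w)) = _
      simp only [buildF]
      rw [ih (fun u => φ ([x] ++ u)), List.append_assoc]
      rfl

theorem buildF_short (hP : P ≤ finAut X d) (φ : List X → Pat X d) (hφ : ∀ v, φ v ∈ P)
    (hedge : ∀ (v : List X) (x : X), patEdge X d (φ v) x (φ (v ++ [x]))) :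
    ∀ (w : List X) (hw : w.length ≤ d),
      buildF hd φ w = ((φ [] ⟨w, hw⟩ : {l : List X // l.length ≤ d}) : List X) := by
  intro w
  induction w generalizing φ with
  | nil =>
      intro hw
      obtain ⟨g, hg⟩ := hP (hφ [])
      rw [← hg]
      exact (g.2.1).symm
  | cons x w ih =>
      intro hw
      have h1 : (([x] : List X)).length ≤ d := by simpa using hd
      have hw2 : w.length + 1 ≤ d := by simpa using hw
      have hw' : w.length ≤ d := by omega
      have hwd : w.length ≤ d - 1 := by omega
      have hed := hedge [] x w hwd hw
      have hc := finAut_cons (hP (hφ [])) x w h1 hw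
      show ((φ [] ⟨[x], h1⟩ : {l : List X // l.length ≤ d}) : List X)
          ++ buildF hd (fun v => φ ([x] ++ v)) w = _
      rw [ih (fun v => φ ([x] ++ v)) (fun v => hφ _)
        (fun v y => by
          have := hedge ([x] ++ v) y
          simpa [List.append_assoc] using this) hw']
      rw [hc, hed]
      rfl

theorem build_right_inv (hP : P ≤ finAut X d) (φ : List X → Pat X d) (hφ : ∀ v, φ v ∈ P) :
    ∀ w : List X, buildF hd φ (invBuild hd φ w) = w := by
  intro w
  induction w generalizing φ with
  | nil => rfl
  | cons x w ih =>
      have h1 : (([x] : List X)).length ≤ d := by simpa using hd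
      set l : List X := (((φ [])⁻¹ ⟨[x], h1⟩ : {l : List X // l.length ≤ d}) : List X) with hl
      have hlen : l.length = 1 := by
        have := finAut_len (hP (P.inv_mem (hφ []))) ⟨[x], h1⟩
        exact this
      obtain ⟨y, hy⟩ := List.length_eq_one_iff.mp hlen
      show buildF hd φ (l ++ invBuild hd (fun v => φ (l ++ v)) w) = x :: w
      rw [buildF_append]
      rw [ih (fun v => φ (l ++ v)) (fun v => hφ _)]
      have hval : buildF hd φ l = [x] := by
        rw [hy]
        show ((φ [] ⟨[y], h1⟩ : {l : List X // l.length ≤ d}) : List X) ++ [] = [x]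
        have : (⟨[y], h1⟩ : {l : List X // l.length ≤ d}) = (φ [])⁻¹ ⟨[x], h1⟩ := by
          apply Subtype.ext; exact hy.symm
        rw [this]
        simp
      rw [hval]
      rfl

theorem build_left_inv (hP : P ≤ finAut X d) (φ : List X → Pat X d) (hφ : ∀ v, φ v ∈ P) :
    ∀ w : List X, invBuild hd φ (buildF hd φ w) = w := by
  intro w
  induction w generalizing φ with
  | nil => rfl
  | cons x w ih =>
      have h1 : (([x] : List X)).length ≤ d := by simpa using hd
      set m : List X := ((φ [] ⟨[x], h1⟩ : {l : List X // l.length ≤ d}) : List X) with hm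
      have hlen : m.length = 1 := by
        have := finAut_len (hP (hφ [])) ⟨[x], h1⟩
        simpa using this
      obtain ⟨z, hz⟩ := List.length_eq_one_iff.mp hlen
      show invBuild hd φ (m ++ buildF hd (fun v => φ ([x] ++ v)) w) = x :: w
      rw [hz]
      show (((φ [])⁻¹ ⟨[z], h1⟩ : {l : List X // l.length ≤ d}) : List X)
        ++ invBuild hd
          (fun v => φ ((((φ [])⁻¹ ⟨[z], h1⟩ : {l : List X // l.length ≤ d}) : List X) ++ v))
          (buildF hd (fun v => φ ([x] ++ v)) w) = x :: w
      have hpre : ((φ [])⁻¹ ⟨[z], h1⟩ : {l : List X // l.length ≤ d}) = ⟨[x], h1⟩ := by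
        have : (⟨[z], h1⟩ : {l : List X // l.length ≤ d}) = φ [] ⟨[x], h1⟩ := by
          apply Subtype.ext; exact hz.symm
        rw [this]; simp
      rw [hpre]
      show [x] ++ invBuild hd (fun v => φ ([x] ++ v)) (buildF hd (fun v => φ ([x] ++ v)) w) = x :: w
      rw [ih (fun v => φ ([x] ++ v)) (fun v => hφ _)]
      rfl

end Aux


/-- every `g ∈ G_P` defines a homomorphism of labeled graphs
`X* → Γ_P`, `v ↦ g_(v)|_(X^[d])`, and conversely every such homomorphism arises from a
unique element of `G_P`. -/
theorem statement12 {X : Type*} [Fintype X] [Nontrivial X] (d : ℕ) (hd : 1 ≤ d)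
    (P : Subgroup (Pat X d)) (hP : P ≤ finAut X d) :
    (∀ g ∈ GP X d P, (∀ v : List X, restr X d (sect g v) ∈ P) ∧
      ∀ (v : List X) (x : X),
        patEdge X d (restr X d (sect g v)) x (restr X d (sect g (v ++ [x])))) ∧
    (∀ φ : List X → Pat X d, (∀ v : List X, φ v ∈ P) →
      (∀ (v : List X) (x : X), patEdge X d (φ v) x (φ (v ++ [x]))) →
      ∃! g : ↥(treeAut X), g ∈ GP X d P ∧ ∀ v : List X, restr X d (sect g v) = φ v) := by
  constructor
  · intro g hg
    refine ⟨hg, ?_⟩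
    intro v x w hw hw'
    show (sectFun (g : Equiv.Perm (List X)) v (x :: w)).tail
        = sectFun (g : Equiv.Perm (List X)) (v ++ [x]) w
    simp only [sectFun, List.tail_drop, List.length_append, List.length_cons,
      List.length_nil, List.append_assoc, List.singleton_append]
  · intro φ hφ hedge
    have hL := build_left_inv (hd := hd) hP φ hφ
    have hR := build_right_inv (hd := hd) hP φ hφ
    set F : Equiv.Perm (List X) := ⟨buildF hd φ, invBuild hd φ, hL, hR⟩ with hF
    have h1x : ∀ x : X, (([x] : List X)).length ≤ d := fun x => by simpa using hd
    have hmem : F ∈ treeAut X := by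
      refine ⟨rfl, ?_⟩
      intro v x
      have key : F (v ++ [x]) = buildF hd φ v ++ buildF hd (fun u => φ (v ++ u)) [x] :=
        buildF_append φ v [x]
      have hlen : ((φ (v ++ []) ⟨[x], h1x x⟩ : {l : List X // l.length ≤ d}) : List X).length
          = 1 := by
        exact finAut_len (hP (hφ (v ++ []))) ⟨[x], h1x x⟩
      obtain ⟨y, hy⟩ := List.length_eq_one_iff.mp hlen
      refine ⟨y, ?_⟩
      rw [key]
      show buildF hd φ v
          ++ (((φ (v ++ []) ⟨[x], h1x x⟩ : {l : List X // l.length ≤ d}) : List X) ++ [])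
          = F v ++ [y]
      rw [hy]
      rfl
    set g : ↥(treeAut X) := ⟨F, hmem⟩ with hg
    have hsect : ∀ v : List X, restr X d (sect g v) = φ v := by
      intro v
      apply Equiv.ext
      rintro ⟨w, hw⟩
      apply Subtype.ext
      show sectFun F v w = ((φ v ⟨w, hw⟩ : {l : List X // l.length ≤ d}) : List X)
      have hstep : sectFun F v w = buildF hd (fun u => φ (v ++ u)) w := by
        show (F (v ++ w)).drop v.length = _
        rw [show F (v ++ w) = buildF hd φ v ++ buildF hd (fun u => φ (v ++ u)) w from
          buildF_append φ v w, ← buildF_length (hd := hd) hP φ hφ v, List.drop_left]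
      have hshort := buildF_short (hd := hd) hP (fun u => φ (v ++ u)) (fun u => hφ _)
        (fun u y => by
          have h := hedge (v ++ u) y
          rw [List.append_assoc] at h
          exact h) w hw
      rw [hstep, hshort]
      rw [List.append_nil]
    have hGP : g ∈ GP X d P := fun v => by rw [hsect v]; exact hφ v
    refine ⟨g, ⟨hGP, hsect⟩, ?_⟩
    rintro g' ⟨hg'P, hg'sect⟩
    apply Subtype.ext
    apply Equiv.ext
    intro w
    induction w using List.reverseRecOn with
    | nil => rw [g'.2.1, g.2.1]
    | append_singleton v x ih =>
        have e1 := treeAut.apply_append g'.2 v [x]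
        have e2 := treeAut.apply_append g.2 v [x]
        have s1 : sectFun (g' : Equiv.Perm (List X)) v [x]
            = ((φ v ⟨[x], h1x x⟩ : {l : List X // l.length ≤ d}) : List X) :=
          congrArg (fun a : Pat X d =>
            ((a ⟨[x], h1x x⟩ : {l : List X // l.length ≤ d}) : List X)) (hg'sect v)
        have s2 : sectFun (g : Equiv.Perm (List X)) v [x]
            = ((φ v ⟨[x], h1x x⟩ : {l : List X // l.length ≤ d}) : List X) :=
          congrArg (fun a : Pat X d =>
            ((a ⟨[x], h1x x⟩ : {l : List X // l.length ≤ d}) : List X)) (hsect v)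
        rw [e1, e2, ih, s1, s2]
end

section
/- For a level-transitive self-similar group of finite type G_P given by patterns of depth d, the level stabilizer St_{G_P}(n) for n ≥ d is isomorphic to the direct product of |X|^{n-d+1} copies of St_{G_P}(d-1), with each factor acting on the corresponding subtree vX* for v ∈ X^{n-d+1}. -/
open List

/- ### Auxiliary lemmas -/

theorem mem_levelStab_iff {X : Type*} {n : ℕ} {g : ↥(treeAut X)} :
    g ∈ levelStab X n ↔ ∀ w : List X, w.length ≤ n → (g : Equiv.Perm (List X)) w = w := by
  rw [levelStab, MonoidHom.mem_ker]
  constructor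
  · intro h w hw
    have h2 := congrFun (congrArg (fun e : Pat X n =>
      (e : {l : List X // l.length ≤ n} → {l : List X // l.length ≤ n})) h) ⟨w, hw⟩
    exact congrArg Subtype.val h2
  · intro h
    apply Equiv.ext
    intro w
    exact Subtype.ext (h w.1 w.2)

theorem sect_mem_GP' {X : Type*} {d : ℕ} {P : Subgroup (Pat X d)} {g : ↥(treeAut X)}
    (hg : g ∈ GP X d P) (v : List X) : sect g v ∈ GP X d P := fun u => by
  rw [← sect_append]; exact hg (v ++ u)

theorem sect_mem_levelStab {X : Type*} {g : ↥(treeAut X)} {n k : ℕ}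
    (hg : g ∈ levelStab X n) {v : List X} (hv : v.length + k ≤ n) :
    sect g v ∈ levelStab X k := by
  rw [mem_levelStab_iff] at hg ⊢
  intro w hw
  rw [sect_apply]
  have h1 : (g : Equiv.Perm (List X)) (v ++ w) = v ++ w :=
    hg _ (by rw [List.length_append]; omega)
  simp [sectFun, h1]

/-- Glue a family of tree automorphisms at level `m` into one map of the tree. -/
def glueFun {X : Type*} (m : ℕ) (h : List X → ↥(treeAut X)) (w : List X) : List X :=
  w.take m ++ ((h (w.take m) : ↥(treeAut X)) : Equiv.Perm (List X)) (w.drop m)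

theorem glueFun_of_le {X : Type*} {m : ℕ} {h : List X → ↥(treeAut X)} {w : List X}
    (hw : w.length ≤ m) : glueFun m h w = w := by
  have ht : w.take m = w := List.take_of_length_le hw
  have hd : w.drop m = [] := List.drop_eq_nil_of_le hw
  simp [glueFun, ht, hd, (h w).2.1]

theorem glueFun_append {X : Type*} {m : ℕ} {h : List X → ↥(treeAut X)} {v : List X}
    (hv : v.length = m) (u : List X) :
    glueFun m h (v ++ u) = v ++ ((h v : ↥(treeAut X)) : Equiv.Perm (List X)) u := by
  have ht : (v ++ u).take m = v := by rw [← hv]; exact List.take_left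
  have hd : (v ++ u).drop m = u := by rw [← hv]; exact List.drop_left
  rw [glueFun, ht, hd]

theorem glueFun_one {X : Type*} (m : ℕ) (w : List X) :
    glueFun m (fun _ => (1 : ↥(treeAut X))) w = w := by
  simp [glueFun]

theorem glueFun_comp {X : Type*} (m : ℕ) (h h' : List X → ↥(treeAut X)) (w : List X) :
    glueFun m h (glueFun m h' w) = glueFun m (fun v => h v * h' v) w := by
  rcases le_or_gt w.length m with hw | hw
  · rw [glueFun_of_le hw, glueFun_of_le hw, glueFun_of_le hw]
  · have hv : (w.take m).length = m := by rw [List.length_take]; omega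
    conv_lhs => rw [← List.take_append_drop m w]
    conv_rhs => rw [← List.take_append_drop m w]
    rw [glueFun_append hv, glueFun_append hv, glueFun_append hv]
    rfl

/-- The glued tree automorphism as a permutation. -/
def glueEquiv {X : Type*} (m : ℕ) (h : List X → ↥(treeAut X)) : Equiv.Perm (List X) where
  toFun := glueFun m h
  invFun := glueFun m (fun v => (h v)⁻¹)
  left_inv := fun w => by
    rw [glueFun_comp]
    simpa using glueFun_one m w
  right_inv := fun w => by
    rw [glueFun_comp]
    simpa using glueFun_one m w

theorem glueEquiv_mem {X : Type*} (m : ℕ) (h : List X → ↥(treeAut X)) :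
    glueEquiv m h ∈ treeAut X := by
  refine ⟨glueFun_of_le (by simp), ?_⟩
  intro w x
  show ∃ y, glueFun m h (w ++ [x]) = glueFun m h w ++ [y]
  rcases le_or_gt m w.length with hw | hw
  · have ht : (w ++ [x]).take m = w.take m := List.take_append_of_le_length hw
    have hd : (w ++ [x]).drop m = w.drop m ++ [x] := List.drop_append_of_le_length hw
    obtain ⟨y, hy⟩ := (h (w.take m)).2.2 (w.drop m) x
    exact ⟨y, by rw [glueFun, glueFun, ht, hd, hy, ← List.append_assoc]⟩
  · refine ⟨x, ?_⟩
    rw [glueFun_of_le (le_of_lt hw),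
      glueFun_of_le (by rw [List.length_append]; simpa using hw)]

theorem sect_glue {X : Type*} (m : ℕ) (h : List X → ↥(treeAut X)) {v : List X}
    (hv : v.length = m) :
    sect ⟨glueEquiv m h, glueEquiv_mem m h⟩ v = h v := by
  apply Subtype.ext
  apply Equiv.ext
  intro w
  rw [sect_apply]
  show (glueFun m h (v ++ w)).drop v.length = _
  rw [glueFun_append hv, List.drop_left]

/-- for a level-transitive `G_P` of depth `d` and `n ≥ d`, the stabilizer
`St_(G_P)(n)` is isomorphic to the direct product of `|X|^(n-d+1)` copies of
`St_(G_P)(d-1)`, the factor at `v ∈ X^(n-d+1)` acting on the subtree `vX*` (given by the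
section at `v`). -/
theorem statement14 {X : Type*} [Fintype X] [Nontrivial X] (d : ℕ) (hd : 1 ≤ d)
    (P : Subgroup (Pat X d)) (hP : P ≤ finAut X d)
    (htr : LevelTrans (GP X d P)) (n : ℕ) (hn : d ≤ n) :
    ∃ e : ↥(GP X d P ⊓ levelStab X n) ≃*
        ({v : List X // v.length = n - d + 1} → ↥(GP X d P ⊓ levelStab X (d - 1))),
      ∀ (g : ↥(GP X d P ⊓ levelStab X n)) (v : {v : List X // v.length = n - d + 1}),
        ((e g v : ↥(GP X d P ⊓ levelStab X (d - 1))) : ↥(treeAut X))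
          = sect (g : ↥(treeAut X)) v.1 := by
  classical
  set m := n - d + 1 with hm
  have hmn : m ≤ n := by omega
  -- the forward homomorphism, given by taking sections at level m
  let φ : ↥(GP X d P ⊓ levelStab X n) →*
      ({v : List X // v.length = m} → ↥(GP X d P ⊓ levelStab X (d - 1))) :=
    MonoidHom.mk'
      (fun g => fun v =>
        ⟨sect (g : ↥(treeAut X)) v.1,
          Subgroup.mem_inf.2
            ⟨sect_mem_GP' (Subgroup.mem_inf.1 g.2).1 v.1,
              sect_mem_levelStab (Subgroup.mem_inf.1 g.2).2 (by rw [v.2]; omega)⟩⟩)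
      (by
        intro a b
        funext v
        apply Subtype.ext
        show sect ((a : ↥(treeAut X)) * (b : ↥(treeAut X))) v.1
          = sect (a : ↥(treeAut X)) v.1 * sect (b : ↥(treeAut X)) v.1
        rw [sect_mul]
        congr 2
        exact (mem_levelStab_iff.1 (Subgroup.mem_inf.1 b.2).2) v.1 (by rw [v.2]; omega))
  have hinj : Function.Injective φ := by
    refine (injective_iff_map_eq_one φ).mpr ?_
    intro a ha
    have hst := mem_levelStab_iff.1 (Subgroup.mem_inf.1 a.2).2
    apply Subtype.ext
    apply Subtype.ext
    apply Equiv.ext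
    intro w
    show ((a : ↥(treeAut X)) : Equiv.Perm (List X)) w = w
    rcases le_or_gt m w.length with hw | hw
    · have hv : (w.take m).length = m := by rw [List.length_take]; omega
      have hsect : sect (a : ↥(treeAut X)) (w.take m) = 1 := by
        have := congrArg Subtype.val (congrFun ha ⟨w.take m, hv⟩)
        exact this
      conv_lhs => rw [← List.take_append_drop m w]
      rw [treeAut.apply_append (a : ↥(treeAut X)).2,
        hst (w.take m) (by omega), ← sect_apply, hsect]
      show w.take m ++ w.drop m = w
      exact List.take_append_drop m w
    · exact hst w (by omega)
  have hsurj : Function.Surjective φ := by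
    intro f
    set h : List X → ↥(treeAut X) := fun v =>
      if hv : v.length = m then ((f ⟨v, hv⟩ : ↥(GP X d P ⊓ levelStab X (d - 1))) : ↥(treeAut X))
      else 1 with hhdef
    have hh : ∀ (v : List X) (hv : v.length = m),
        h v = ((f ⟨v, hv⟩ : ↥(GP X d P ⊓ levelStab X (d - 1))) : ↥(treeAut X)) :=
      fun v hv => dif_pos hv
    set g : ↥(treeAut X) := ⟨glueEquiv m h, glueEquiv_mem m h⟩ with hgdef
    have hsectg : ∀ (v : List X) (hv : v.length = m),
        sect g v = ((f ⟨v, hv⟩ : ↥(GP X d P ⊓ levelStab X (d - 1))) : ↥(treeAut X)) :=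
      fun v hv => (sect_glue m h hv).trans (hh v hv)
    have hgst : g ∈ levelStab X n := by
      rw [mem_levelStab_iff]
      intro w hw
      show glueFun m h w = w
      rcases le_or_gt w.length m with h1 | h1
      · exact glueFun_of_le h1
      · have hv : (w.take m).length = m := by rw [List.length_take]; omega
        conv_lhs => rw [← List.take_append_drop m w]
        rw [glueFun_append hv, hh _ hv]
        have hf1 := mem_levelStab_iff.1 (Subgroup.mem_inf.1 (f ⟨w.take m, hv⟩).2).2
        rw [hf1 (w.drop m) (by rw [List.length_drop]; omega)]
        exact List.take_append_drop m w
    have hgGP : g ∈ GP X d P := by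
      intro u
      rcases le_or_gt m u.length with h1 | h1
      · have hv : (u.take m).length = m := by rw [List.length_take]; omega
        have hs : sect g u
            = sect ((f ⟨u.take m, hv⟩ : ↥(GP X d P ⊓ levelStab X (d - 1))) : ↥(treeAut X))
                (u.drop m) := by
          conv_lhs => rw [← List.take_append_drop m u]
          rw [sect_append, hsectg _ hv]
        rw [hs]
        exact (Subgroup.mem_inf.1 (f ⟨u.take m, hv⟩).2).1 (u.drop m)
      · have hlev : sect g u ∈ levelStab X d :=
          sect_mem_levelStab hgst (by omega)
        rw [MonoidHom.mem_ker.1 hlev]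
        exact P.one_mem
    refine ⟨⟨g, Subgroup.mem_inf.2 ⟨hgGP, hgst⟩⟩, ?_⟩
    funext v
    apply Subtype.ext
    show sect g v.1 = ((f v : ↥(GP X d P ⊓ levelStab X (d - 1))) : ↥(treeAut X))
    rw [hsectg v.1 v.2]
  exact ⟨MulEquiv.ofBijective φ ⟨hinj, hsurj⟩, fun g v => rfl⟩
end
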